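/- arXiv:1508.06185 — 5 statements merged into one kernel-verified Lean document; each statement's English description precedes it below -/
import Mathlib

section
/- Every natural number is the sum of a bounded number (depending only on the base d) of palindromes in base d; specifically, there exists a constant C such that for every integer d ≥ 2, every natural number n can be written as a sum of at most C·d palindromes in base d. -/
def IsPalindrome (d n : ℕ) : Prop := (Nat.digits d n).reverse = Nat.digits d n

namespace PalAux

lemma pal_zero (d : ℕ) : IsPalindrome d 0 := by simp [IsPalindrome]

lemma pal_single {d n : ℕ} (hd : 2 ≤ d) (hn : n < d) : IsPalindrome d n := by
  rcases Nat.eq_zero_or_pos n with h | h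
  · subst h; exact pal_zero d
  · unfold IsPalindrome
    rw [Nat.digits_def' (by omega : 1 < d) h, Nat.mod_eq_of_lt hn,
      Nat.div_eq_of_lt hn]
    simp

lemma ofDigits_replicate {d : ℕ} (hd : 2 ≤ d) (m : ℕ) :
    Nat.ofDigits d (List.replicate m (d - 1)) = d ^ m - 1 := by
  induction m with
  | zero => simp
  | succ k ih =>
    rw [List.replicate_succ, Nat.ofDigits_cons, ih]
    have h1 : 1 ≤ d ^ k := Nat.one_le_pow _ _ (by omega)
    have h2 : d ^ (k+1) = d * d ^ k := by ring
    obtain ⟨P, hP⟩ : ∃ P, d ^ k = P + 1 := ⟨d ^ k - 1, by omega⟩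
    have h3 : d ^ (k+1) = d * P + d := by rw [h2, hP]; ring
    rw [hP, h3]
    have : d * (P + 1 - 1) = d * P := by norm_num
    omega

lemma pal_repdigit {d m : ℕ} (hd : 2 ≤ d) (hm : 1 ≤ m) :
    IsPalindrome d (d ^ m - 1) := by
  unfold IsPalindrome
  rw [← ofDigits_replicate hd m]
  rw [Nat.digits_ofDigits d (by omega) _ (by
      intro l hl
      have := List.eq_of_mem_replicate hl
      omega)
    (by
      intro h
      rw [List.getLast_replicate]
      omega)]
  simp [List.reverse_replicate]


/-- aggregated two-sided digit value: B d e [x0,...,xk] = Σ xi (d^i + d^(e-i)) conceptually -/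
def B (d : ℕ) : ℕ → List ℕ → ℕ
  | _, [] => 0
  | e, x :: s => x * (1 + d ^ e) + d * B d (e - 2) s

@[simp] lemma B_nil (d e : ℕ) : B d e [] = 0 := rfl
lemma B_cons (d e x : ℕ) (s : List ℕ) :
    B d e (x :: s) = x * (1 + d ^ e) + d * B d (e - 2) s := rfl

lemma B_eq_zero (d : ℕ) : ∀ (e : ℕ) (s : List ℕ), (∀ x ∈ s, x = 0) → B d e s = 0 := by
  intro e s
  induction s generalizing e with
  | nil => intro _; rfl
  | cons x t ih =>
    intro h
    rw [B_cons, h x (by simp), ih (e-2) (fun y hy => h y (by simp [hy]))]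
    simp

lemma B_append_zeros (d : ℕ) : ∀ (e : ℕ) (s : List ℕ) (p : ℕ),
    B d e (s ++ List.replicate p 0) = B d e s := by
  intro e s
  induction s generalizing e with
  | nil =>
    intro p
    simp only [List.nil_append, B_nil]
    exact B_eq_zero d e _ (fun x hx => List.eq_of_mem_replicate hx)
  | cons x t ih =>
    intro p
    simp only [List.cons_append, B_cons, ih]

lemma B_zip_add (d : ℕ) : ∀ (u : List ℕ) (e : ℕ) (v : List ℕ), u.length = v.length →
    B d e (List.zipWith (· + ·) u v) = B d e u + B d e v := by
  intro u
  induction u with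
  | nil =>
    intro e v hv
    have hv' : v = [] := by
      cases v
      · rfl
      · simp at hv
    subst hv'; simp
  | cons x t ih =>
    intro e v hv
    match v with
    | [] => simp at hv
    | y :: w =>
      simp only [List.zipWith_cons_cons, B_cons]
      rw [ih (e-2) w (by simpa using hv)]
      ring

lemma B_formula (d : ℕ) : ∀ (s : List ℕ) (x : ℕ),
    B d (2 * s.length + 1) (x :: s) =
      Nat.ofDigits d (x :: s) + d ^ (s.length + 1) * Nat.ofDigits d ((x :: s).reverse) := by
  intro s
  induction s with
  | nil =>
    intro x
    simp [B_cons, Nat.ofDigits_cons, Nat.ofDigits_nil]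
    ring
  | cons y t ih =>
    intro x
    have hL : (2 * (y :: t).length + 1) - 2 = 2 * t.length + 1 := by
      simp only [List.length_cons]; omega
    rw [B_cons, hL, ih y]
    have hrev : ((x :: y :: t).reverse) = ((y :: t).reverse) ++ [x] := by simp
    rw [hrev, Nat.ofDigits_append]
    simp only [List.length_reverse, List.length_cons, Nat.ofDigits_cons, Nat.ofDigits_nil]
    have e1 : d ^ (t.length + 1 + 1) = d * d ^ (t.length + 1) := by ring
    have e2 : d ^ (2 * (t.length + 1) + 1) = d ^ (t.length + 1 + 1) * d ^ (t.length + 1) := by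
      rw [← pow_add]; congr 1; ring
    rw [e2, e1]
    ring

lemma mir_val (d : ℕ) (s : List ℕ) (x : ℕ) :
    Nat.ofDigits d ((x :: s) ++ (x :: s).reverse) =
      B d (2 * s.length + 1) (x :: s) := by
  rw [Nat.ofDigits_append, B_formula]
  simp

lemma pal_mir {d : ℕ} (hd : 2 ≤ d) (x : ℕ) (s : List ℕ) (hx : 0 < x)
    (hall : ∀ y ∈ x :: s, y < d) :
    IsPalindrome d (Nat.ofDigits d ((x :: s) ++ (x :: s).reverse)) := by
  unfold IsPalindrome
  have hlist : ∀ l ∈ (x :: s) ++ (x :: s).reverse, l < d := by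
    intro l hl
    rcases List.mem_append.mp hl with h | h
    · exact hall l h
    · exact hall l (List.mem_reverse.mp h)
  have hshape : (x :: s) ++ (x :: s).reverse = ((x :: s) ++ s.reverse) ++ [x] := by
    simp
  have hlast : ∀ h : (x :: s) ++ (x :: s).reverse ≠ [],
      ((x :: s) ++ (x :: s).reverse).getLast h ≠ 0 := by
    intro h
    have h2 : ((x :: s) ++ (x :: s).reverse).getLast h = x := by
      rw [List.getLast_eq_iff_getLast?_eq_some, List.getLast?_append,
        List.getLast?_reverse]
      rfl
    omega
  rw [Nat.digits_ofDigits d (by omega) _ hlist hlast]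
  rw [List.reverse_append, List.reverse_reverse]


lemma zip_min_sub (d : ℕ) : ∀ s : List ℕ,
    List.zipWith (· + ·) (s.map (fun x => min x (d - 1)))
      (s.map (fun x => x - min x (d - 1))) = s := by
  intro s
  induction s with
  | nil => simp
  | cons z w ihw =>
    simp only [List.map_cons, List.zipWith_cons_cons, ihw]
    congr 1
    omega

lemma split_pal {d : ℕ} (hd : 2 ≤ d) :
    ∀ (α : ℕ) (s : List ℕ), (∀ x ∈ s, x ≤ α * (d - 1)) →
    ∃ l : List ℕ, l.length = α ∧ (∀ p ∈ l, IsPalindrome d p) ∧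
      l.sum = B d (2 * s.length + 1) (α :: s) := by
  intro α
  induction α with
  | zero =>
    intro s hs
    refine ⟨[], rfl, by simp, ?_⟩
    rw [B_eq_zero d _ (0 :: s) ?_]
    · simp
    · intro x hx
      rcases List.mem_cons.mp hx with h | h
      · exact h
      · have := hs x h; omega
  | succ a ih =>
    intro s hs
    set t : List ℕ := s.map (fun x => min x (d - 1)) with ht
    set s' : List ℕ := s.map (fun x => x - min x (d - 1)) with hs'
    have hlen_t : t.length = s.length := by simp [ht]
    have hlen_s' : s'.length = s.length := by simp [hs']
    have hzip : List.zipWith (· + ·) (1 :: t) (a :: s') = (a + 1) :: s := by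
      simp only [List.zipWith_cons_cons]
      congr 1
      · omega
      · rw [ht, hs']
        exact zip_min_sub d s
    have hs'bound : ∀ x ∈ s', x ≤ a * (d - 1) := by
      intro x hx
      rw [hs'] at hx
      rcases List.mem_map.mp hx with ⟨y, hy, rfl⟩
      have h1 := hs y hy
      have h2 : (a + 1) * (d - 1) = a * (d - 1) + (d - 1) := by ring
      omega
    obtain ⟨l', hl'len, hl'pal, hl'sum⟩ := ih s' hs'bound
    refine ⟨Nat.ofDigits d ((1 :: t) ++ (1 :: t).reverse) :: l', by simp [hl'len], ?_, ?_⟩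
    · intro p hp
      rcases List.mem_cons.mp hp with h | h
      · subst h
        apply pal_mir hd _ _ (by omega)
        intro y hy
        rcases List.mem_cons.mp hy with h | h
        · omega
        · rw [ht] at h
          rcases List.mem_map.mp h with ⟨z, hz, rfl⟩
          omega
      · exact hl'pal p h
    · rw [List.sum_cons, hl'sum, mir_val, hlen_t]
      have := B_zip_add d (1 :: t) (2 * s.length + 1) (a :: s')
        (by simp [hlen_t, hlen_s'])
      rw [hzip] at this
      rw [hlen_s'] at hl'sum ⊢
      omega


/-- choose a ≤ a₀ within distance < d having a prescribed residue r mod d -/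
lemma exists_residue {d a₀ r : ℕ} (hd : 2 ≤ d) (hr : r < d) (h : d - 1 ≤ a₀) :
    ∃ a, a ≤ a₀ ∧ a₀ - a ≤ d - 1 ∧ a % d = r := by
  have hd0 : 0 < d := by omega
  obtain ⟨q, sq, hq, hsq⟩ : ∃ q sq, a₀ = d * q + sq ∧ sq < d :=
    ⟨a₀ / d, a₀ % d, by rw [Nat.div_add_mod], Nat.mod_lt _ hd0⟩
  by_cases hc : r ≤ sq
  · refine ⟨d * q + r, by omega, by omega, ?_⟩
    rw [Nat.add_mod, Nat.mul_mod_right]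
    simp [Nat.mod_eq_of_lt hr]
  · -- sq < r; need q ≥ 1
    have hq1 : 1 ≤ q := by
      rcases Nat.eq_zero_or_pos q with h0 | h0
      · subst h0; omega
      · exact h0
    obtain ⟨q', rfl⟩ : ∃ q', q = q' + 1 := ⟨q - 1, by omega⟩
    refine ⟨d * q' + r, ?_, ?_, ?_⟩
    · have : d * (q' + 1) = d * q' + d := by ring
      omega
    · have : d * (q' + 1) = d * q' + d := by ring
      omega
    · rw [Nat.add_mod, Nat.mul_mod_right]
      simp [Nat.mod_eq_of_lt hr]

set_option maxHeartbeats 1600000 in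
/-- one steering step of the DP -/
lemma core_step {d m T : ℕ} (hd : 2 ≤ d)
    (hlo : (d + 2) * d ^ (2*m + 9) ≤ T)
    (hhi : T < (d + 2 + 3*d^2) * d ^ (2*m + 9)) :
    ∃ a T', a ≤ 3*d^2 + d + 1 ∧
      T = a * (1 + d ^ (2*m + 9)) + d * T' ∧
      (d + 2) * d ^ (2*m + 7) ≤ T' ∧
      T' < (d + 2 + 3*d^2) * d ^ (2*m + 7) := by
  obtain ⟨e, rfl⟩ : ∃ e, d = e + 2 := ⟨d - 2, by omega⟩
  have hpow : (e+2) ^ (2*m+9) = (e+2) * ((e+2) * (e+2) ^ (2*m+7)) := by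
    rw [show 2*m+9 = (2*m+7)+2 by ring, pow_add]; ring
  obtain ⟨P, hP⟩ : ∃ P, (e+2) ^ (2*m+7) = P := ⟨_, rfl⟩
  rw [hpow, hP] at hlo hhi
  have hP7 : (e+2)^7 ≤ P := by rw [← hP]; exact Nat.pow_le_pow_right (by omega) (by omega)
  have h5 : 32 ≤ (e+2)^5 := by
    calc (32:ℕ) = 2^5 := by norm_num
      _ ≤ (e+2)^5 := Nat.pow_le_pow_left (by omega) 5
  have h7 : 32 * (e+2)^2 ≤ (e+2)^7 := by
    calc 32*(e+2)^2 ≤ (e+2)^5 * (e+2)^2 := Nat.mul_le_mul_right _ h5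
      _ = (e+2)^7 := by ring
  have hcapP : 3*(e+2)^2 + (e+2) + 2 ≤ P := by nlinarith
  have hPpos : 0 < P := by omega
  -- abbre: S = (e+2)*P, dS = (e+2)*((e+2)*P)
  have hT3 : (e+5)*((e+2)*P) ≤ T := by
    calc (e+5)*((e+2)*P) = ((e+5)*(e+2))*P := by ring
      _ ≤ ((e+4)*((e+2)*(e+2)))*P := Nat.mul_le_mul_right _ (by nlinarith)
      _ = (e+4)*((e+2)*((e+2)*P)) := by ring
      _ ≤ T := hlo
  obtain ⟨y, hy⟩ : ∃ y, T = (e+5)*((e+2)*P) + y := ⟨T - (e+5)*((e+2)*P), by omega⟩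
  have hdSpos : 0 < (e+2)*((e+2)*P) := by positivity
  obtain ⟨a₀, ha₀⟩ : ∃ a₀, a₀ = y / ((e+2)*((e+2)*P)) := ⟨_, rfl⟩
  obtain ⟨ρ, hρlt, hρ⟩ : ∃ ρ, ρ < (e+2)*((e+2)*P) ∧ y = a₀ * ((e+2)*((e+2)*P)) + ρ := by
    refine ⟨y % ((e+2)*((e+2)*P)), Nat.mod_lt _ hdSpos, ?_⟩
    rw [ha₀, Nat.mul_comm]
    exact (Nat.div_add_mod y ((e+2)*((e+2)*P))).symm
  have ha₀lo : e + 1 ≤ a₀ := by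
    rw [ha₀, Nat.le_div_iff_mul_le hdSpos]
    have h4 : (e+1)*((e+2)*((e+2)*P)) + (e+5)*((e+2)*P) ≤ (e+4)*((e+2)*((e+2)*P)) := by
      calc (e+1)*((e+2)*((e+2)*P)) + (e+5)*((e+2)*P)
          = ((e+1)*(e+2)+(e+5))*((e+2)*P) := by ring
        _ ≤ ((e+4)*(e+2))*((e+2)*P) := Nat.mul_le_mul_right _ (by nlinarith)
        _ = (e+4)*((e+2)*((e+2)*P)) := by ring
    linarith only [h4, hy, hlo]
  have ha₀hi : a₀ ≤ 3*(e+2)^2 + (e+2) + 1 := by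
    have hylt : y < (3*(e+2)^2 + (e+2) + 2) * ((e+2)*((e+2)*P)) := by
      have : (e+2+2 + 3*(e+2)^2) * ((e+2) * ((e+2) * P))
          = (3*(e+2)^2 + (e+2) + 2) * ((e+2)*((e+2)*P)) := by ring
      rw [← this]
      omega
    have h2 : a₀ < 3*(e+2)^2 + (e+2) + 2 := by
      rw [ha₀]
      exact (Nat.div_lt_iff_lt_mul hdSpos).mpr hylt
    omega
  obtain ⟨a, haa, hdiff, hares⟩ :=
    exists_residue (d := e+2) (a₀ := a₀) (r := T % (e+2)) (by omega)
      (Nat.mod_lt _ (by omega)) (by omega)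
  obtain ⟨δ, hδ⟩ : ∃ δ, a₀ = a + δ := ⟨a₀ - a, by omega⟩
  have hδd : δ ≤ e + 1 := by omega
  have hacap : a ≤ 3*(e+2)^2 + (e+2) + 1 := le_trans haa ha₀hi
  have hPS : P ≤ (e+2)*P := Nat.le_mul_of_pos_left _ (by omega)
  have haS : a ≤ (e+2)*P := by omega
  have hS5 : (e+2)*P ≤ (e+5)*((e+2)*P) := Nat.le_mul_of_pos_left _ (by omega)
  have hle : a ≤ T := by omega
  obtain ⟨k, hk⟩ : ∃ k, T = a + (e+2) * k := by
    have h1 := Nat.div_add_mod T (e+2)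
    have h2 := Nat.div_add_mod a (e+2)
    have hdivle : a / (e+2) ≤ T / (e+2) := Nat.div_le_div_right hle
    obtain ⟨f, hf⟩ : ∃ f, T / (e+2) = a / (e+2) + f := ⟨T/(e+2) - a/(e+2), by omega⟩
    refine ⟨f, ?_⟩
    have h3 : (e+2) * (a / (e+2) + f) = (e+2) * (a/(e+2)) + (e+2) * f := by ring
    rw [hf, h3] at h1
    linarith only [h1, h2, hares]
  obtain ⟨Rem, hRemdef⟩ : ∃ R, R = (e+5)*((e+2)*P) + ρ + δ * ((e+2)*((e+2)*P)) := ⟨_, rfl⟩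
  have hRem : T = a * ((e+2)*((e+2)*P)) + Rem := by
    rw [hy, hρ, hδ, hRemdef]; ring
  have hRem_lo : (e+5)*((e+2)*P) ≤ Rem := by
    rw [hRemdef]
    linarith [Nat.zero_le ρ, Nat.zero_le (δ * ((e+2)*((e+2)*P)))]
  have hRem_hi : Rem < (e+5)*((e+2)*P) + (e+2)^2*((e+2)*P) := by
    have h1 : δ * ((e+2)*((e+2)*P)) ≤ (e+1)*((e+2)*((e+2)*P)) :=
      Nat.mul_le_mul_right _ hδd
    have h2 : (e+2)*((e+2)*P) + (e+1)*((e+2)*((e+2)*P)) = (e+2)^2*((e+2)*P) := by ring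
    rw [hRemdef]
    linarith
  have h1 : a + (e+2)*k = a * ((e+2)*((e+2)*P)) + Rem := by rw [← hk]; exact hRem
  have haRem : a ≤ Rem := by linarith only [haS, hS5, hRem_lo]
  have hkge : a * ((e+2)*P) ≤ k := by
    have h3 : a * ((e+2)*((e+2)*P)) = (e+2)*(a*((e+2)*P)) := by ring
    have h2 : (e+2)*(a*((e+2)*P)) ≤ (e+2)*k := by linarith only [h1, haRem, h3]
    exact Nat.le_of_mul_le_mul_left h2 (by omega)
  obtain ⟨T', hT'⟩ : ∃ T', k = a * ((e+2)*P) + T' := ⟨k - a*((e+2)*P), by omega⟩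
  have h3' : (e+2)*k = a * ((e+2)*((e+2)*P)) + (e+2)*T' := by rw [hT']; ring
  have hDT : (e+2) * T' + a = Rem := by linarith only [h1, h3']
  have hpow2 : (e+2) ^ (2*m+9) = (e+2)*((e+2)*P) := by rw [hpow, hP]
  refine ⟨a, T', hacap, ?_, ?_, ?_⟩
  · rw [hpow2, hk, hT']; ring
  · rw [hP]
    have hsplit : (e+5)*((e+2)*P) = (e+4)*((e+2)*P) + (e+2)*P := by ring
    have hlow : (e+4)*((e+2)*P) ≤ (e+2)*T' := by linarith only [hDT, hRem_lo, hsplit, haS]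
    have h4 : (e+2)*((e+2+2)*P) = (e+4)*((e+2)*P) := by ring
    refine Nat.le_of_mul_le_mul_left ?_ (show 0 < e+2 by omega)
    rw [h4]
    exact hlow
  · rw [hP]
    have hsq1 : 1 ≤ (e+2)^2 := Nat.one_le_pow _ _ (by omega)
    have hsc : (e+5) + (e+2)^2 ≤ (e+2+2) + 3*(e+2)^2 := by omega
    have h5' : ((e+5) + (e+2)^2) * ((e+2)*P) ≤ ((e+2+2) + 3*(e+2)^2) * ((e+2)*P) :=
      Nat.mul_le_mul_right _ hsc
    have hexp : ((e+5) + (e+2)^2) * ((e+2)*P) = (e+5)*((e+2)*P) + (e+2)^2*((e+2)*P) := by ring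
    have hup : (e+2) * T' < ((e+2+2) + 3*(e+2)^2) * ((e+2)*P) := by
      linarith only [hDT, hRem_hi, h5', hexp, Nat.zero_le a]
    refine Nat.lt_of_mul_lt_mul_left (a := e+2) ?_
    calc (e+2) * T' < ((e+2+2) + 3*(e+2)^2) * ((e+2)*P) := hup
      _ = (e+2) * ((e+2+2+3*(e+2)^2) * P) := by ring


lemma core {d : ℕ} (hd : 2 ≤ d) : ∀ (m T : ℕ),
    (d+2) * d^(2*m+7) ≤ T → T < (d+2+3*d^2) * d^(2*m+7) →
    ∃ (u : List ℕ) (r : ℕ), u.length = m ∧ (∀ x ∈ u, x ≤ 3*d^2+d+1) ∧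
      (d+2)*d^7 ≤ r ∧ r < (d+2+3*d^2)*d^7 ∧
      T = B d (2*m+7) u + d^m * r := by
  intro m
  induction m with
  | zero =>
    intro T hlo hhi
    refine ⟨[], T, rfl, by simp, by simpa using hlo, by simpa using hhi, by simp⟩
  | succ m ih =>
    intro T hlo hhi
    have he : 2*(m+1)+7 = 2*m+9 := by ring
    rw [he] at hlo hhi
    obtain ⟨a, T', hacap, heq, hlo', hhi'⟩ := core_step hd hlo hhi
    obtain ⟨u, r, hulen, hubound, hrlo, hrhi, hT'⟩ := ih T' hlo' hhi'
    refine ⟨a :: u, r, by simp [hulen], ?_, hrlo, hrhi, ?_⟩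
    · intro x hx
      rcases List.mem_cons.mp hx with h | h
      · omega
      · exact hubound x h
    · rw [hT'] at heq
      have h2 : (2*(m+1)+7) - 2 = 2*m+7 := by omega
      rw [B_cons, h2, heq, he]
      ring


/-- greedy bound: dividing by d^m - 1 gives quotient ≤ d+1 when below d^(m+1) -/
lemma quot_bound {d m n : ℕ} (hd : 2 ≤ d) (hm : 1 ≤ m) (hn : n < d ^ (m+1)) :
    n / (d ^ m - 1) ≤ d + 1 := by
  have hdm : d ≤ d ^ m := by
    calc d = d ^ 1 := (pow_one d).symm
      _ ≤ d ^ m := Nat.pow_le_pow_right (by omega) hm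
  have hF : 1 ≤ d ^ m - 1 := by omega
  by_contra hc
  push_neg at hc
  have h1 : (d + 2) * (d ^ m - 1) ≤ (n / (d^m - 1)) * (d^m - 1) :=
    Nat.mul_le_mul_right _ (by omega)
  have h2 : (n / (d^m - 1)) * (d^m - 1) ≤ n := Nat.div_mul_le_self n _
  have h3 : d ^ (m+1) = d * d ^ m := by ring
  have h4 : (d+2) * (d^m - 1) ≥ d * d^m := by
    obtain ⟨Q, hQ⟩ : ∃ Q, d ^ m = Q + 1 := ⟨d^m - 1, by omega⟩
    rw [hQ]
    have : (d+2)*(Q+1-1) = (d+2)*Q := by norm_num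
    rw [this]
    nlinarith [hQ ▸ hdm]
  omega

/-- small numbers: n < d^m is a sum of ≤ m*(d+2) palindromes -/
lemma small {d : ℕ} (hd : 2 ≤ d) : ∀ (m n : ℕ), n < d ^ m →
    ∃ l : List ℕ, l.length ≤ m * (d + 2) ∧ (∀ p ∈ l, IsPalindrome d p) ∧ l.sum = n := by
  intro m
  induction m with
  | zero =>
    intro n hn
    rw [pow_zero] at hn
    have hn0 : n = 0 := by omega
    subst hn0
    exact ⟨[], by simp, by simp, rfl⟩
  | succ m ih =>
    intro n hn
    rcases Nat.eq_zero_or_pos m with rfl | hm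
    · -- n < d
      refine ⟨[n], by simp only [List.length_cons, List.length_nil]; omega, ?_, by simp⟩
      intro p hp
      rcases List.mem_singleton.mp hp with rfl
      exact pal_single hd (by simpa using hn)
    · set F := d ^ m - 1 with hF
      have hdm : d ≤ d ^ m := by
        calc d = d ^ 1 := (pow_one d).symm
          _ ≤ d ^ m := Nat.pow_le_pow_right (by omega) hm
      have hFpos : 0 < F := by omega
      set t := n / F with ht
      have htb : t ≤ d + 1 := quot_bound hd hm hn
      have hrem : n % F < F := Nat.mod_lt _ hFpos
      have hremPow : n % F < d ^ m := by omega
      obtain ⟨l', hl'len, hl'pal, hl'sum⟩ := ih (n % F) hremPow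
      refine ⟨List.replicate t F ++ l', ?_, ?_, ?_⟩
      · rw [List.length_append, List.length_replicate]
        have : m * (d+2) + (d+2) = (m+1)*(d+2) := by ring
        omega
      · intro p hp
        rcases List.mem_append.mp hp with h | h
        · rw [List.eq_of_mem_replicate h, hF]
          exact pal_repdigit hd hm
        · exact hl'pal p h
      · rw [List.sum_append, List.sum_replicate, smul_eq_mul, hl'sum]
        have h1 := Nat.div_add_mod n F
        rw [← ht] at h1
        have h1' : t * F + n % F = n := by rw [Nat.mul_comm]; exact h1
        omega

/-- greedy chain: x < d^(m+k) decomposes into ≤ k*(d+1) repdigit palindromes plus x_f < d^m -/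
lemma chain {d : ℕ} (hd : 2 ≤ d) : ∀ (k m x : ℕ), 1 ≤ m → x < d ^ (m + k) →
    ∃ (l : List ℕ) (xf : ℕ), l.length ≤ k * (d + 1) ∧ (∀ p ∈ l, IsPalindrome d p) ∧
      x = l.sum + xf ∧ xf < d ^ m := by
  intro k
  induction k with
  | zero => intro m x hm hx; exact ⟨[], x, by simp, by simp, by simp, by simpa using hx⟩
  | succ k ih =>
    intro m x hm hx
    set F := d ^ (m + k) - 1 with hF
    have hmk : 1 ≤ m + k := by omega
    have hdm : d ≤ d ^ (m+k) := by
      calc d = d ^ 1 := (pow_one d).symm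
        _ ≤ d ^ (m+k) := Nat.pow_le_pow_right (by omega) hmk
    have hFpos : 0 < F := by omega
    set t := x / F with htdef
    have htb : t ≤ d + 1 := by
      have : x < d ^ ((m+k)+1) := by
        rw [show (m+k)+1 = m + (k+1) by ring]
        exact hx
      exact quot_bound hd hmk this
    have hrem : x % F < d ^ (m+k) := by
      have := Nat.mod_lt x (y := F) hFpos
      omega
    obtain ⟨l', xf, hlen, hpal, hsum, hxf⟩ := ih m (x % F) hm hrem
    refine ⟨List.replicate t F ++ l', xf, ?_, ?_, ?_, hxf⟩
    · rw [List.length_append, List.length_replicate]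
      have : k * (d+1) + (d+1) = (k+1)*(d+1) := by ring
      omega
    · intro p hp
      rcases List.mem_append.mp hp with h | h
      · rw [List.eq_of_mem_replicate h, hF]
        exact pal_repdigit hd hmk
      · exact hpal p h
    · rw [List.sum_append, List.sum_replicate, smul_eq_mul]
      have h1 := Nat.div_add_mod x F
      rw [← htdef] at h1
      have h1' : t * F + x % F = x := by rw [Nat.mul_comm]; exact h1
      omega

/-- tail: (ofDigits of ρ) * d^m is a sum of ≤ |ρ|*d palindromes, m ≥ 1 -/
lemma tail {d : ℕ} (hd : 2 ≤ d) : ∀ (ρ : List ℕ) (m : ℕ), 1 ≤ m → (∀ x ∈ ρ, x < d) →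
    ∃ l : List ℕ, l.length ≤ ρ.length * d ∧ (∀ p ∈ l, IsPalindrome d p) ∧
      l.sum = (Nat.ofDigits d ρ) * d ^ m := by
  intro ρ
  induction ρ with
  | nil => intro m _ _; exact ⟨[], by simp, by simp, by simp [Nat.ofDigits_nil]⟩
  | cons x ρ' ih =>
    intro m hm hall
    obtain ⟨l', hl'len, hl'pal, hl'sum⟩ := ih (m+1) (by omega) (fun y hy => hall y (by simp [hy]))
    refine ⟨List.replicate x (d ^ m - 1) ++ [x] ++ l', ?_, ?_, ?_⟩
    · simp only [List.length_append, List.length_replicate, List.length_singleton]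
      have hx : x < d := hall x (by simp)
      have : (ρ'.length + 1) * d = ρ'.length * d + d := by ring
      simp only [List.length_cons]
      omega
    · intro p hp
      simp only [List.append_assoc, List.mem_append] at hp
      rcases hp with h | h | h
      · rw [List.eq_of_mem_replicate h]
        exact pal_repdigit hd hm
      · rcases List.mem_singleton.mp h with rfl
        exact pal_single hd (hall p (by simp))
      · exact hl'pal p h
    · rw [List.sum_append, List.sum_append, List.sum_replicate, smul_eq_mul, hl'sum]
      simp only [List.sum_singleton]
      rw [Nat.ofDigits_cons]
      have h1 : 1 ≤ d ^ m := Nat.one_le_pow _ _ (by omega)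
      obtain ⟨Q, hQ⟩ : ∃ Q, d ^ m = Q + 1 := ⟨d ^ m - 1, by omega⟩
      have h2 : d ^ (m+1) = d * d ^ m := by ring
      rw [hQ] at h2 ⊢
      have h3 : Q + 1 - 1 = Q := by omega
      rw [h3, h2]
      ring

/-- residue fixing step -/
lemma resid {d Λ xf : ℕ} (hd : 2 ≤ d) (hΛ : 3 ≤ Λ) (hxf : xf < d ^ Λ) :
    ∃ t Ty, t ≤ d - 1 ∧ d ^ Λ + xf = t * (d ^ (Λ-1) - 1) + d * Ty ∧
      d ^ (Λ-2) ≤ Ty ∧ Ty < 2 * d ^ (Λ-1) := by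
  have e1 : d ^ Λ = d * d ^ (Λ-1) := by
    rw [← pow_succ']
    congr 1
    omega
  have e2 : d ^ (Λ-1) = d * d ^ (Λ-2) := by
    rw [← pow_succ']
    congr 1
    omega
  have hq : xf / d < d ^ (Λ-1) := by
    rw [Nat.div_lt_iff_lt_mul (by omega : 0 < d)]
    calc xf < d ^ Λ := hxf
      _ = d ^ (Λ-1) * d := by rw [e1]; ring
  obtain ⟨q, s, hqs, hslt⟩ : ∃ q s, xf = d * q + s ∧ s < d :=
    ⟨xf / d, xf % d, by rw [Nat.div_add_mod], Nat.mod_lt _ (by omega)⟩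
  have hqb : q < d ^ (Λ-1) := by
    have : q = xf / d := by
      rw [hqs]
      rw [Nat.mul_add_div (by omega : 0 < d)]
      simp [Nat.div_eq_of_lt hslt]
    rw [this]; exact hq
  rcases Nat.eq_zero_or_pos s with rfl | hs
  · refine ⟨0, d ^ (Λ-1) + q, by omega, ?_, ?_, by omega⟩
    · rw [hqs, e1]; ring
    · have h3 : d ^ (Λ-2) ≤ d ^ (Λ-1) := Nat.pow_le_pow_right (by omega) (by omega)
      omega
  · refine ⟨d - s, s * d ^ (Λ-2) + q + 1, by omega, ?_, ?_, ?_⟩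
    · have h1 : 1 ≤ d ^ (Λ-1) := Nat.one_le_pow _ _ (by omega)
      obtain ⟨R, hR⟩ : ∃ R, d ^ (Λ-1) = R + 1 := ⟨d ^ (Λ-1) - 1, by omega⟩
      obtain ⟨w, hw⟩ : ∃ w, d = s + w := ⟨d - s, by omega⟩
      rw [hqs, e1, hR]
      rw [show d - s = w by omega]
      rw [show R + 1 - 1 = R by omega]
      have he2' : R + 1 = d * d ^ (Λ-2) := by rw [← hR]; exact e2
      -- goal: d*(R+1) + (d*q + s) = w*R + d*(s*d^(Λ-2) + q + 1)
      -- using d = s + w and R+1 = d*d^(Λ-2)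
      have expand : d * (R+1) + (d*q + s) = d*R + d + d*q + s := by ring
      have expand2 : w*R + d*(s*d^(Λ-2) + q + 1) = w*R + s*(d*d^(Λ-2)) + d*q + d := by ring
      rw [expand, expand2, ← he2']
      -- goal: d*R + d + d*q + s = w*R + s*(R+1) + d*q + d
      have : s*(R+1) = s*R + s := by ring
      rw [this]
      have h4 : d * R = w*R + s*R := by rw [hw]; ring
      omega
    · -- d^(Λ-2) ≤ Ty
      have := Nat.le_mul_of_pos_left (d ^ (Λ-2)) hs
      omega
    · -- s*d^(Λ-2) + q + 1 < 2*d^(Λ-1)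
      have h5 : s * d ^ (Λ-2) ≤ (d-1) * d ^ (Λ-2) := Nat.mul_le_mul_right _ (by omega)
      have h6 : (d-1) * d ^ (Λ-2) + d ^ (Λ-2) = d ^ (Λ-1) := by
        rw [e2]
        obtain ⟨w, hw⟩ : ∃ w, d = w + 1 := ⟨d-1, by omega⟩
        rw [hw]
        rw [show w + 1 - 1 = w by omega]
        ring
      have h7 : 1 ≤ d ^ (Λ-2) := Nat.one_le_pow _ _ (by omega)
      omega


set_option maxHeartbeats 1600000 in
/-- main case : n ≥ d^15 -/
lemma main_case {d n : ℕ} (hd : 2 ≤ d) (hn : d ^ 15 ≤ n) :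
    ∃ l : List ℕ, l.length ≤ 30 * d ∧ (∀ p ∈ l, IsPalindrome d p) ∧ l.sum = n := by
  have hd1 : 1 < d := by omega
  have hn0 : n ≠ 0 := by
    have : 0 < d ^ 15 := Nat.pow_pos (by omega)
    omega
  obtain ⟨L, hL⟩ : ∃ L, L = Nat.log d n := ⟨_, rfl⟩
  have hLle : d ^ L ≤ n := by rw [hL]; exact Nat.pow_log_le_self d hn0
  have hLlt : n < d ^ (L + 1) := by rw [hL]; exact Nat.lt_pow_succ_log_self hd1 n
  have hL15 : 15 ≤ L := by rw [hL]; exact (Nat.le_log_iff_pow_le hd1 hn0).mpr hn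
  obtain ⟨h, hh⟩ : ∃ h, h = (L - 4) / 2 := ⟨_, rfl⟩
  obtain ⟨Λ, hΛdef⟩ : ∃ Λ, Λ = 2 * h := ⟨_, rfl⟩
  have hΛ10 : 10 ≤ Λ := by omega
  have hΛle : Λ + 4 ≤ L := by omega
  have hΛge : L + 1 ≤ Λ + 6 := by omega
  obtain ⟨m₁, hm₁⟩ : ∃ m₁, m₁ = h - 5 := ⟨_, rfl⟩
  have hm₁exp : 2 * m₁ + 7 = Λ - 3 := by omega
  -- power facts
  have pΛ1 : d ^ Λ = d * d ^ (Λ - 1) := by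
    rw [← pow_succ']; congr 1; omega
  have pΛ2 : d ^ (Λ-1) = d * d ^ (Λ - 2) := by
    rw [← pow_succ']; congr 1; omega
  have pΛ3 : d ^ (Λ-2) = d * d ^ (Λ - 3) := by
    rw [← pow_succ']; congr 1; omega
  have pΛ4 : d ^ Λ = d^2 * d ^ (Λ-2) := by
    rw [← pow_add]; congr 1; omega
  have pΛ5 : d ^ (Λ-1) = d^2 * d ^ (Λ-3) := by
    rw [← pow_add]; congr 1; omega
  have p1 : d ^ (2*m₁+9) = d ^ (Λ-1) := by congr 1; omega
  have p2 : d ^ (m₁+1) = d * d ^ m₁ := by rw [← pow_succ']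
  -- τc ≤ n
  have hZval : 8*d*(1 + d^(Λ-1)) = 8*d + 8*(d^Λ) := by
    rw [pΛ1]; ring
  have h8d : 8 * d ≤ d ^ Λ := by
    have h9 : (2:ℕ)^9 ≤ d^(Λ-1) := by
      calc (2:ℕ)^9 ≤ d^9 := Nat.pow_le_pow_left (by omega) 9
        _ ≤ d^(Λ-1) := Nat.pow_le_pow_right (by omega) (by omega)
    calc 8*d ≤ 2^9 * d := by omega
      _ ≤ d^(Λ-1) * d := Nat.mul_le_mul_right _ h9
      _ = d ^ Λ := by rw [pΛ1]; ring
  have hdsq : d + 2 ≤ d^2 := by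
    have h1 : 2*d ≤ d*d := Nat.mul_le_mul_right d hd
    have h2 : d^2 = d*d := by ring
    omega
  have hd2Λ : (d+2) * d^(Λ-2) ≤ d ^ Λ := by
    have : d + 2 ≤ d^2 := hdsq
    calc (d+2) * d^(Λ-2) ≤ d^2 * d^(Λ-2) := Nat.mul_le_mul_right _ this
      _ = d ^ Λ := pΛ4.symm
  have h16 : (16:ℕ) ≤ d^4 := by
    calc (16:ℕ) = 2^4 := by norm_num
      _ ≤ d^4 := Nat.pow_le_pow_left (by omega) 4
  have hpowL : d ^ (Λ+4) ≤ d ^ L := Nat.pow_le_pow_right (by omega) hΛle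
  have hΛ4 : d ^ (Λ+4) = d^4 * d^Λ := by rw [← pow_add]; congr 1; omega
  have h16Λ : 16 * d^Λ ≤ d^4 * d^Λ := Nat.mul_le_mul_right _ h16
  have hτn : 8*d*(1 + d^(Λ-1)) + (d+2)*d^(Λ-2) + d^Λ ≤ n := by
    have hfin : 8*d + 8*(d^Λ) + (d+2)*d^(Λ-2) + d^Λ ≤ 11 * d^Λ := by
      omega
    calc 8*d*(1 + d^(Λ-1)) + (d+2)*d^(Λ-2) + d^Λ
        = 8*d + 8*(d^Λ) + (d+2)*d^(Λ-2) + d^Λ := by rw [hZval]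
      _ ≤ 11 * d^Λ := hfin
      _ ≤ 16 * d^Λ := by omega
      _ ≤ d^4 * d^Λ := h16Λ
      _ = d ^ (Λ+4) := hΛ4.symm
      _ ≤ d ^ L := hpowL
      _ ≤ n := hLle
  obtain ⟨x, hx⟩ : ∃ x, n = 8*d*(1 + d^(Λ-1)) + (d+2)*d^(Λ-2) + d^Λ + x :=
    ⟨n - (8*d*(1 + d^(Λ-1)) + (d+2)*d^(Λ-2) + d^Λ), by omega⟩
  have hxlt : x < d ^ (Λ + 6) := by
    have : n < d ^ (Λ+6) := by
      calc n < d ^ (L+1) := hLlt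
        _ ≤ d ^ (Λ+6) := Nat.pow_le_pow_right (by omega) hΛge
    omega
  obtain ⟨l₁, xf, hl₁len, hl₁pal, hl₁sum, hxf⟩ := chain hd 6 Λ x (by omega) hxlt
  obtain ⟨t, Ty, htle, hteq, hTylo, hTyhi⟩ := resid hd (by omega) hxf
  -- T₁
  obtain ⟨T₁, hT₁⟩ : ∃ T₁, T₁ = (d+2) * d^(Λ-3) + Ty := ⟨_, rfl⟩
  have hT₁lo : (d+2) * d^(2*m₁+7) ≤ T₁ := by
    rw [hm₁exp, hT₁]
    omega
  have hT₁hi : T₁ < (d+2+3*d^2) * d^(2*m₁+7) := by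
    rw [hm₁exp, hT₁]
    have h2 : Ty < 2 * (d^2 * d^(Λ-3)) := by rw [← pΛ5]; exact hTyhi
    have h3 : (d+2+3*d^2) * d^(Λ-3) = (d+2)*d^(Λ-3) + 3*(d^2 * d^(Λ-3)) := by ring
    have h4 : 0 ≤ d^2 * d^(Λ-3) := Nat.zero_le _
    omega
  obtain ⟨u, r, hulen, hubd, hrlo, hrhi, hTeq⟩ := core hd m₁ T₁ hT₁lo hT₁hi
  -- split palindromes
  obtain ⟨s, hs⟩ : ∃ s, s = u ++ List.replicate 4 0 := ⟨_, rfl⟩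
  have hslen : s.length = m₁ + 4 := by rw [hs]; simp [hulen]
  have hsbd : ∀ y ∈ s, y ≤ 8*d * (d - 1) := by
    intro y hy
    rw [hs] at hy
    rcases List.mem_append.mp hy with hy' | hy'
    · have h1 := hubd y hy'
      have h2 : 3*d^2+d+1 ≤ 8*d*(d-1) := by
        obtain ⟨e, rfl⟩ : ∃ e, d = e + 2 := ⟨d - 2, by omega⟩
        have h3 : e + 2 - 1 = e + 1 := by omega
        rw [h3]
        have q1 : (e+2)^2 = e*e + 4*e + 4 := by ring
        have q2 : 8*(e+2)*(e+1) = 8*(e*e) + 24*e + 16 := by ring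
        rw [q1, q2]
        omega
      omega
    · rw [List.eq_of_mem_replicate hy']
      exact Nat.zero_le _
  obtain ⟨l₂, hl₂len, hl₂pal, hl₂sum⟩ := split_pal hd (8*d) s hsbd
  have hl₂val : l₂.sum = 8*d*(1 + d^(Λ-1)) + d * B d (2*m₁+7) u := by
    rw [hl₂sum]
    have he1 : 2 * s.length + 1 = 2*m₁+9 := by rw [hslen]; ring
    have he2 : 2*m₁+9-2 = 2*m₁+7 := by omega
    rw [B_cons, he1, he2, hs, B_append_zeros, p1]
  -- tail list
  have hr11 : r < d ^ 11 := by
    have h1 : d+2+3*d^2 ≤ d^4 := by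
      have a1 : 4 ≤ d^2 := by
        have : 2*2 ≤ d*d := Nat.mul_le_mul hd hd
        have h2 : d^2 = d*d := by ring
        omega
      have a3 : 4*d^2 ≤ d^2*d^2 := Nat.mul_le_mul_right _ a1
      have a4 : d^2*d^2 = d^4 := by ring
      omega
    have h2 : d ^ 11 = d^4 * d^7 := by rw [← pow_add]
    calc r < (d+2+3*d^2) * d^7 := hrhi
      _ ≤ d^4 * d^7 := Nat.mul_le_mul_right _ h1
      _ = d ^ 11 := h2.symm
  have hrpos : r ≠ 0 := by
    have : 0 < (d+2) * d^7 := by positivity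
    omega
  obtain ⟨ρ, hρ⟩ : ∃ ρ, ρ = Nat.digits d r := ⟨_, rfl⟩
  have hρlen : ρ.length ≤ 11 := by
    rw [hρ, Nat.digits_len d r hd1 hrpos]
    have := Nat.log_lt_of_lt_pow hrpos hr11
    omega
  have hρlt : ∀ y ∈ ρ, y < d := by
    intro y hy
    rw [hρ] at hy
    exact Nat.digits_lt_base hd1 hy
  obtain ⟨l₃, hl₃len, hl₃pal, hl₃sum⟩ := tail hd ρ (m₁+1) (by omega) hρlt
  have hl₃val : l₃.sum = r * d ^ (m₁+1) := by
    rw [hl₃sum, hρ, Nat.ofDigits_digits]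
  -- assemble
  refine ⟨l₁ ++ List.replicate t (d^(Λ-1) - 1) ++ l₂ ++ l₃, ?_, ?_, ?_⟩
  · simp only [List.length_append, List.length_replicate]
    have : ρ.length * d ≤ 11 * d := Nat.mul_le_mul_right _ hρlen
    have h6 : 6 * (d+1) = 6*d+6 := by ring
    have h27 : 30 * d = 26*d + 4*d := by ring
    omega
  · intro p hp
    simp only [List.mem_append] at hp
    rcases hp with ((hp | hp) | hp) | hp
    · exact hl₁pal p hp
    · rw [List.eq_of_mem_replicate hp]
      exact pal_repdigit hd (by omega)
    · exact hl₂pal p hp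
    · exact hl₃pal p hp
  · simp only [List.sum_append, List.sum_replicate, smul_eq_mul]
    -- value computation
    have eq7 : d * T₁ = (d+2)*d^(Λ-2) + d * Ty := by
      rw [hT₁, pΛ3]; ring
    have eq8 : d * T₁ = d * B d (2*m₁+7) u + d ^ (m₁+1) * r := by
      rw [hTeq, Nat.mul_add]
      congr 1
      rw [p2, Nat.mul_assoc]
    have hl₃val' : l₃.sum = d ^ (m₁+1) * r := by rw [hl₃val]; ring
    -- n = l₁.sum + t*F + l₂.sum + l₃.sum
    rw [hl₂val, hl₃val']
    linarith only [hx, hl₁sum, hteq, eq7, eq8]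


end PalAux

theorem palindromes_additive_basis_bounded :
    ∃ C : ℕ, ∀ d : ℕ, 2 ≤ d → ∀ n : ℕ,
      ∃ l : List ℕ, l.length ≤ C * d ∧ (∀ p ∈ l, IsPalindrome d p) ∧ l.sum = n := by
  refine ⟨30, ?_⟩
  intro d hd n
  by_cases hn : n < d ^ 15
  · obtain ⟨l, hlen, hpal, hsum⟩ := PalAux.small hd 15 n hn
    refine ⟨l, ?_, hpal, hsum⟩
    have : 15 * (d + 2) = 15*d + 30 := by ring
    omega
  · push_neg at hn
    obtain ⟨l, hlen, hpal, hsum⟩ := PalAux.main_case hd hn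
    exact ⟨l, hlen, hpal, hsum⟩
end

section
/- If a natural number n has at most k nonzero digits in its base-d expansion (d ≥ 2), then n is the sum of at most 2k palindromes in base d. -/
lemma pal_ofDigits (d : ℕ) (hd : 2 ≤ d) (L : List ℕ) (hrev : L.reverse = L)
    (hlt : ∀ x ∈ L, x < d) (hlast : ∀ (h : L ≠ []), L.getLast h ≠ 0) :
    IsPalindrome d (Nat.ofDigits d L) := by
  unfold IsPalindrome
  rw [Nat.digits_ofDigits d (by omega) L hlt hlast, hrev]

lemma rep_succ (d : ℕ) (hd : 2 ≤ d) (j : ℕ) :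
    Nat.ofDigits d (List.replicate j (d - 1)) + 1 = d ^ j := by
  induction j with
  | zero => simp [Nat.ofDigits]
  | succ m ih =>
    rw [List.replicate_succ, Nat.ofDigits_cons, pow_succ, ← ih]
    obtain ⟨c, rfl⟩ : ∃ c, d = c + 2 := ⟨d - 2, by omega⟩
    have h1 : c + 2 - 1 = c + 1 := rfl
    rw [h1]; ring

lemma digit_term (d : ℕ) (hd : 2 ≤ d) (a j : ℕ) (ha : a ≠ 0) (ha' : a < d) :
    ∃ l : List ℕ, l.length ≤ 2 ∧ (∀ p ∈ l, IsPalindrome d p) ∧ l.sum = a * d ^ j := by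
  have pal1 : IsPalindrome d 1 := by
    have := pal_ofDigits d hd [1] (by simp) (by intro x hx; simp at hx; omega)
      (by intro h; simp)
    simpa [Nat.ofDigits] using this
  cases j with
  | zero =>
    have pala : IsPalindrome d a := by
      have := pal_ofDigits d hd [a] (by simp) (by intro x hx; simp at hx; omega)
        (by intro h; simpa using ha)
      simpa [Nat.ofDigits] using this
    refine ⟨[a], by simp, ?_, by simp⟩
    intro p hp; simp at hp; rw [hp]; exact pala
  | succ m =>
    rcases Nat.lt_or_ge a 2 with h2 | h2
    · -- a = 1
      have ha1 : a = 1 := by omega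
      subst ha1
      refine ⟨[Nat.ofDigits d (List.replicate (m + 1) (d - 1)), 1], by simp, ?_, ?_⟩
      · intro p hp; simp at hp
        rcases hp with rfl | rfl
        · refine pal_ofDigits d hd _ List.reverse_replicate ?_ ?_
          · intro x hx; rw [List.eq_of_mem_replicate hx]; omega
          · intro h hlast
            have hm := List.getLast_mem h
            rw [hlast] at hm
            have := List.eq_of_mem_replicate hm
            omega
        · exact pal1
      · simp only [List.sum_cons, List.sum_nil, add_zero, one_mul]
        exact rep_succ d hd (m + 1)
    · -- a ≥ 2
      refine ⟨[Nat.ofDigits d ((a - 1) :: (List.replicate m (d - 1) ++ [a - 1])),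
          d + 1 - a], by simp, ?_, ?_⟩
      · intro p hp; simp at hp
        rcases hp with rfl | rfl
        · refine pal_ofDigits d hd _ ?_ ?_ ?_
          · simp [List.reverse_replicate]
          · intro x hx
            simp [List.mem_replicate] at hx
            rcases hx with rfl | ⟨-, rfl⟩ | rfl <;> omega
          · intro h hlast
            have hm := List.getLast_mem h
            rw [hlast] at hm
            simp [List.mem_replicate] at hm
            rcases hm with h0 | ⟨-, h0⟩ | h0 <;> omega
        · have := pal_ofDigits d hd [d + 1 - a] (by simp)
            (by intro x hx; simp at hx; omega) (by intro h; simp; omega)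
          simpa [Nat.ofDigits] using this
      · simp only [List.sum_cons, List.sum_nil, add_zero]
        rw [Nat.ofDigits_cons, Nat.ofDigits_append]
        have hrep := rep_succ d hd m
        obtain ⟨b, rfl⟩ : ∃ b, a = b + 2 := ⟨a - 2, by omega⟩
        obtain ⟨e, rfl⟩ : ∃ e, d = b + 3 + e := ⟨d - (b + 3), by omega⟩
        set X := Nat.ofDigits (b + 3 + e) (List.replicate m (b + 3 + e - 1)) with hX
        have h1 : b + 2 - 1 = b + 1 := rfl
        have h2 : b + 3 + e + 1 - (b + 2) = e + 2 := by omega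
        have h3 : (List.replicate m (b + 3 + e - 1)).length = m := by simp
        rw [h1, h2, h3]
        have h4 : (b + 3 + e) ^ m = X + 1 := by omega
        rw [pow_succ, h4]
        simp [Nat.ofDigits]
        ring

lemma main_list (d : ℕ) (hd : 2 ≤ d) (L : List ℕ) (hlt : ∀ x ∈ L, x < d) :
    ∃ l : List ℕ, l.length ≤ 2 * (L.filter (· ≠ 0)).length ∧
      (∀ p ∈ l, IsPalindrome d p) ∧ l.sum = Nat.ofDigits d L := by
  induction L using List.reverseRecOn with
  | nil => exact ⟨[], by simp, by simp, by simp [Nat.ofDigits]⟩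
  | append_singleton M a ih =>
    obtain ⟨l, hl, hp, hs⟩ := ih (fun x hx => hlt x (by simp [hx]))
    by_cases ha : a = 0
    · subst ha
      refine ⟨l, ?_, hp, ?_⟩
      · simpa [List.filter_append] using hl
      · rw [Nat.ofDigits_append, hs]
        simp [Nat.ofDigits]
    · obtain ⟨l2, hl2, hp2, hs2⟩ := digit_term d hd a M.length ha (hlt a (by simp))
      refine ⟨l ++ l2, ?_, ?_, ?_⟩
      · have hf : ((M ++ [a]).filter (· ≠ 0)).length = (M.filter (· ≠ 0)).length + 1 := by
          simp [List.filter_append, ha]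
        rw [List.length_append, hf]
        omega
      · intro p hp'
        rw [List.mem_append] at hp'
        rcases hp' with h' | h'
        · exact hp p h'
        · exact hp2 p h'
      · rw [List.sum_append, hs, hs2, Nat.ofDigits_append]
        simp [Nat.ofDigits, mul_comm]

theorem sum_two_k_palindromes (d : ℕ) (hd : 2 ≤ d) (k n : ℕ)
    (h : ((Nat.digits d n).filter (· ≠ 0)).length ≤ k) :
    ∃ l : List ℕ, l.length ≤ 2 * k ∧ (∀ p ∈ l, IsPalindrome d p) ∧ l.sum = n := by
  obtain ⟨l, hl, hp, hs⟩ := main_list d hd (Nat.digits d n)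
    (fun x hx => Nat.digits_lt_base (by omega) hx)
  exact ⟨l, le_trans hl (by omega), hp, by rw [hs, Nat.ofDigits_digits]⟩
end

section
/- Let d ≥ 2 and let l, k be natural numbers with l ≥ k + 6. For every n with d^{l−1} ≤ n < d^l and n divisible by d^k, one can write n = s + m where s is a sum of at most 2d numbers, each of the form c·(d^{l'−1} + d^k) for some 0 ≤ c < d and l' ∈ {l−1, l−2, l−3}, and where m satisfies d^{l−2} ≤ m < d^{l−1} and m is divisible by d^{k+1}. -/
theorem inductive_passage (d l k n : ℕ) (hd : 2 ≤ d) (hl : k + 6 ≤ l)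
    (h1 : d ^ (l - 1) ≤ n) (h2 : n < d ^ l) (h3 : d ^ k ∣ n) :
    ∃ (S : List ℕ) (m : ℕ),
      S.length ≤ 2 * d ∧
      (∀ s ∈ S, ∃ c l', c < d ∧ (l' = l - 1 ∨ l' = l - 2 ∨ l' = l - 3) ∧
        s = c * (d ^ (l' - 1) + d ^ k)) ∧
      n = S.sum + m ∧ d ^ (l - 2) ≤ m ∧ m < d ^ (l - 1) ∧ d ^ (k + 1) ∣ m := by
  obtain ⟨u, rfl⟩ : ∃ u, l = k + 6 + u := ⟨l - (k + 6), by omega⟩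
  obtain ⟨t, rfl⟩ := h3
  obtain ⟨f, rfl⟩ : ∃ f, d = f + 1 := ⟨d - 1, by omega⟩
  have hf1 : 1 ≤ f := by omega
  have hdk : 0 < (f + 1) ^ k := pow_pos (by omega) k
  rw [show k + 6 + u - 1 = k + (u + 5) by omega, pow_add] at h1
  rw [show k + 6 + u = k + (u + 6) by omega, pow_add] at h2
  have h1' : (f + 1) ^ (u + 5) ≤ t := Nat.le_of_mul_le_mul_left h1 hdk
  have h2' : t < (f + 1) ^ (u + 6) := Nat.lt_of_mul_lt_mul_left h2
  have hZ2 : (f + 1) * (f + 1) ≤ (f + 1) ^ (u + 2) := by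
    calc (f + 1) * (f + 1) = (f + 1) ^ 2 := (sq (f + 1)).symm
    _ ≤ (f + 1) ^ (u + 2) := Nat.pow_le_pow_right (by omega) (by omega)
  have hst0 : 0 < f * (f + 1) ^ (u + 3) :=
    Nat.mul_pos (by omega) (pow_pos (by omega) _)
  set st := f * (f + 1) ^ (u + 3) with hstdef
  set q := (t - (f + 1) ^ (u + 5)) / st with hqdef
  have hqm : st * q + (t - (f + 1) ^ (u + 5)) % st = t - (f + 1) ^ (u + 5) :=
    Nat.div_add_mod _ _
  have hqmlt : (t - (f + 1) ^ (u + 5)) % st < st := Nat.mod_lt _ hst0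
  have hq6 : (f + 1) ^ (u + 5) + (f + 1) * (f + 1) * st = (f + 1) ^ (u + 6) := by
    rw [hstdef]; ring
  have hqlt : q < (f + 1) * (f + 1) := by
    rw [hqdef, Nat.div_lt_iff_lt_mul hst0]
    omega
  set a := q / (f + 1) with hadef
  set b := q % (f + 1) + 1 with hbdef
  have hdm : (f + 1) * a + q % (f + 1) = q := Nat.div_add_mod _ _
  have hbd : q % (f + 1) < f + 1 := Nat.mod_lt _ (by omega)
  have halt : a < f + 1 := by
    rw [hadef, Nat.div_lt_iff_lt_mul (by omega : 0 < f + 1)]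
    omega
  have ha : a ≤ f := by omega
  have hb : b ≤ f + 1 := by omega
  have hab : a * (f + 1) + b = q + 1 := by rw [hbdef, mul_comm]; omega
  set c := (t + a + b) % (f + 1) with hcdef
  have hcd : c < f + 1 := Nat.mod_lt _ (by omega)
  have hc : c ≤ f := by omega
  set W := (t + a + b) / (f + 1) with hWdef
  have hw : (f + 1) * W + c = t + a + b := Nat.div_add_mod _ _
  set E := c * (f + 1) ^ (u + 2) + (a + b) * f + c with hEdef
  set Sm := (q + 1) * st + E with hSmdef
  have h6 : (q + 1) * st = st * q + st := by ring
  clear_value W c b a q st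
  -- the key size estimate
  have hkey : st + E + (f + 1) ^ (u + 4) ≤ (f + 1) ^ (u + 5) := by
    have e3 : (f + 1) ^ (u + 3) = (f + 1) * (f + 1) ^ (u + 2) := by ring
    have e4 : (f + 1) ^ (u + 4) = ((f + 1) * (f + 1)) * (f + 1) ^ (u + 2) := by ring
    have e5 : (f + 1) ^ (u + 5) = ((f + 1) * ((f + 1) * (f + 1))) * (f + 1) ^ (u + 2) := by ring
    rw [hEdef, hstdef, e3, e4, e5]
    generalize (f + 1) ^ (u + 2) = G at hZ2 ⊢
    have hG4 : 4 ≤ G := by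
      have h22 : 2 * 2 ≤ (f + 1) * (f + 1) := Nat.mul_le_mul (by omega) (by omega)
      omega
    have hle1 : f ≤ f * f := Nat.le_mul_of_pos_right f (by omega)
    have hle2 : f ≤ f * (f * f) := Nat.le_mul_of_pos_right f (Nat.mul_pos (by omega) (by omega))
    have h22' : (2 * f + 1) * f + f = 2 * (f * f) + 2 * f := by ring
    have hfy : (2 * f + 1) * f + f ≤ f * f * G := by
      have h23 : (f * f) * 4 ≤ (f * f) * G := mul_le_mul_right hG4 (f * f)
      omega
    have i1 : c * G ≤ f * G := mul_le_mul_left hc G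
    have i2 : (a + b) * f ≤ (2 * f + 1) * f := mul_le_mul_left (by omega) f
    calc f * ((f + 1) * G) + (c * G + (a + b) * f + c) + (f + 1) * (f + 1) * G
        ≤ f * ((f + 1) * G) + (f * G + f * f * G) + (f + 1) * (f + 1) * G := by
          omega
      _ = (f * (f + 1) + f + f * f + (f + 1) * (f + 1)) * G := by ring
      _ ≤ ((f + 1) * ((f + 1) * (f + 1))) * G := by
          refine mul_le_mul_left ?_ G
          have e6 : f * (f + 1) + f + f * f + (f + 1) * (f + 1) = 3 * (f * f) + 4 * f + 1 := by
            ring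
          have e7 : (f + 1) * ((f + 1) * (f + 1)) = f * (f * f) + 3 * (f * f) + 3 * f + 1 := by
            ring
          omega
      _ = (f + 1) * ((f + 1) * (f + 1)) * G := by ring
  have hG : (f + 1) ^ (u + 4) + Sm ≤ t := by omega
  have hlt : t < Sm + (f + 1) ^ (u + 5) := by omega
  have hSmle : Sm ≤ t := by omega
  -- divisibility
  have hSmN : Sm = (q + 1) * (f * (f + 1) ^ (u + 3)) +
      (c * (f + 1) ^ (u + 2) + (a + b) * f + c) := by rw [hSmdef, hEdef, hstdef]
  have hdvd : (f + 1) ∣ (t - Sm) := by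
    have h9 : ((f : ℤ) + 1) ∣ ((t : ℤ) - (Sm : ℤ)) := by
      have hwZ : ((f : ℤ) + 1) * (W : ℤ) + (c : ℤ) = (t : ℤ) + a + b := by exact_mod_cast hw
      have hSmZ : (Sm : ℤ) = ((q : ℤ) + 1) * ((f : ℤ) * ((f : ℤ) + 1) ^ (u + 3)) +
          ((c : ℤ) * ((f : ℤ) + 1) ^ (u + 2) + ((a : ℤ) + b) * f + c) := by
        exact_mod_cast congrArg (Nat.cast : ℕ → ℤ) hSmN
      refine ⟨(W : ℤ) - ((q : ℤ) + 1) * ((f : ℤ) * ((f : ℤ) + 1) ^ (u + 2)) -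
        (c : ℤ) * ((f : ℤ) + 1) ^ (u + 1) - ((a : ℤ) + b), ?_⟩
      linear_combination -hwZ - hSmZ
    have hcast : ((t - Sm : ℕ) : ℤ) = (t : ℤ) - Sm := by
      exact_mod_cast Int.natCast_sub hSmle
    rw [← hcast] at h9
    exact_mod_cast h9
  -- assemble
  refine ⟨List.replicate a (f * ((f + 1) ^ (k + (u + 4)) + (f + 1) ^ k)) ++
      List.replicate b (f * ((f + 1) ^ (k + (u + 3)) + (f + 1) ^ k)) ++
      [c * ((f + 1) ^ (k + (u + 2)) + (f + 1) ^ k)],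
    (f + 1) ^ k * (t - Sm), ?_, ?_, ?_, ?_, ?_, ?_⟩
  · simp only [List.length_append, List.length_replicate, List.length_cons, List.length_nil]
    omega
  · intro s hs
    simp only [List.mem_append, List.mem_replicate, List.mem_singleton] at hs
    rcases hs with (⟨-, rfl⟩ | ⟨-, rfl⟩) | rfl
    · exact ⟨f, k + 5 + u, by omega, Or.inl (by omega),
        by rw [show k + 5 + u - 1 = k + (u + 4) by omega]⟩
    · exact ⟨f, k + 4 + u, by omega, Or.inr (Or.inl (by omega)),
        by rw [show k + 4 + u - 1 = k + (u + 3) by omega]⟩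
    · exact ⟨c, k + 3 + u, by omega, Or.inr (Or.inr (by omega)),
        by rw [show k + 3 + u - 1 = k + (u + 2) by omega]⟩
  · have hsum : (List.replicate a (f * ((f + 1) ^ (k + (u + 4)) + (f + 1) ^ k)) ++
        List.replicate b (f * ((f + 1) ^ (k + (u + 3)) + (f + 1) ^ k)) ++
        [c * ((f + 1) ^ (k + (u + 2)) + (f + 1) ^ k)]).sum = (f + 1) ^ k * Sm := by
      simp only [List.sum_append, List.sum_replicate, List.sum_cons, List.sum_nil,
        smul_eq_mul, add_zero]
      rw [hSmN, ← hab]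
      ring
    rw [hsum, ← Nat.mul_add, Nat.add_sub_cancel' hSmle]
  · rw [show k + 6 + u - 2 = k + (u + 4) by omega, pow_add]
    exact Nat.mul_le_mul le_rfl (by omega)
  · rw [show k + 6 + u - 1 = k + (u + 5) by omega, pow_add]
    exact mul_lt_mul_of_pos_left (by omega) hdk
  · rw [pow_succ]
    exact mul_dvd_mul_left _ hdvd
end

section
/- Let d ≥ 2 and l ≥ 8, and let n satisfy d^{l−1} ≤ n < d^l. Then n can be written as n = s + f(n), where s is a sum of O(d) palindromes of the form (d−1)·d^{j} + (d−1) with j ∈ {l−2, l−3, l−4, l−5}, and f(n) = (d−1)d^{l−2} + (d−1)d^{l−3} + (d−1)d^{l−4} + m with d² − 2d ≤ m < d^{l−4}. Concretely: there exist natural numbers a ≤ d−1, b ≤ d, e ≤ d, g ≤ d such that n − a·((d−1)d^{l−2}+(d−1)) − b·((d−1)d^{l−3}+(d−1)) − e·((d−1)d^{l−4}+(d−1)) − g·((d−1)d^{l−5}+(d−1)) lies in [(d−1)d^{l−2}+(d−1)d^{l−3}+(d−1)d^{l−4}+d²−2d, (d−1)d^{l−2}+(d−1)d^{l−3}+(d−1)d^{l−4}+d^{l−4}).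 -/
private lemma step_lemma (R P c : ℕ) (hP : 0 < P) :
    ∃ a s, a ≤ c ∧ R = a * P + s ∧ (s < P ∨ R = c * P + s) := by
  rcases le_or_gt (R / P) c with h | h
  · refine ⟨R / P, R % P, h, ?_, Or.inl (Nat.mod_lt _ hP)⟩
    have := Nat.div_add_mod R P
    linarith
  · have hcp : c * P ≤ R :=
      le_trans (Nat.mul_le_mul_right P h.le) (Nat.div_mul_le_self R P)
    exact ⟨c, R - c * P, le_refl c, (Nat.add_sub_cancel' hcp).symm,
      Or.inr (Nat.add_sub_cancel' hcp).symm⟩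

private lemma aux_lemma (d p n : ℕ) (hd : 2 ≤ d) (hp : d ^ 3 ≤ p)
    (h1 : p * d ^ 4 ≤ n) (h2 : n < p * d ^ 5) :
    ∃ a b e g m : ℕ, a ≤ d - 1 ∧ b ≤ d ∧ e ≤ d ∧ g ≤ d ∧
      n = a * ((d - 1) * (p * d ^ 3) + (d - 1))
        + b * ((d - 1) * (p * d ^ 2) + (d - 1))
        + e * ((d - 1) * (p * d) + (d - 1))
        + g * ((d - 1) * p + (d - 1))
        + ((d - 1) * (p * d ^ 3) + (d - 1) * (p * d ^ 2) + (d - 1) * (p * d) + m) ∧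
      d ^ 2 - 2 * d ≤ m ∧ m < p * d := by
  obtain ⟨q, hq⟩ : ∃ q, d = q + 1 := ⟨d - 1, by omega⟩
  have hq1 : d - 1 = q := by omega
  have hq0 : 1 ≤ q := by omega
  -- basic product facts
  have Kp : d * d * d ≤ p := by
    calc d * d * d = d ^ 3 := by ring
    _ ≤ p := hp
  have Kd2 : d * d ≤ d * d * d := le_mul_of_one_le_right (Nat.zero_le _) (by omega)
  have Kdd : d * d ≤ p := le_trans Kd2 Kp
  have Kppd : p ≤ p * d := le_mul_of_one_le_right (Nat.zero_le _) (by omega)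
  have hW' : d * d ≤ p * d + 2 * d := by linarith
  obtain ⟨W, hW⟩ : ∃ W, p * d + 2 * d = W + d * d :=
    ⟨p * d + 2 * d - d * d, (Nat.sub_add_cancel hW').symm⟩
  obtain ⟨n', hn'⟩ : ∃ n', n = p * d ^ 4 + n' := Nat.exists_eq_add_of_le h1
  -- key multiplicative identities
  have K0 : p * d ^ 5 = p * d ^ 4 + q * (p * d ^ 4) := by rw [hq]; ring
  have K1 : q * (p * d ^ 4) = q * q * (p * d ^ 3) + q * (p * d ^ 3) := by rw [hq]; ring
  have K4 : p * d ^ 4 = q * (p * d ^ 3) + p * d ^ 3 := by rw [hq]; ring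
  have K5 : p * d ^ 3 = q * (p * d ^ 2) + p * d ^ 2 := by rw [hq]; ring
  have K6 : p * d ^ 2 = q * (p * d) + p * d := by rw [hq]; ring
  have K7 : p * d = q * p + p := by rw [hq]; ring
  have hqW : q ≤ W := by linarith
  have hr_ub : n' + W < q * (p * d ^ 4) + W := by
    have := h2; rw [hn'] at this; linarith
  -- step 1
  obtain ⟨a, r1, ha, hE1, hC1⟩ := step_lemma (n' + W) (q * (p * d ^ 3) + q) q
    (Nat.lt_of_lt_of_le hq0 (Nat.le_add_left q _))
  have hr1 : r1 < q * (p * d ^ 3) + W := by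
    rcases hC1 with h | h
    · linarith
    · have h' : n' + W = q * q * (p * d ^ 3) + q * q + r1 := by rw [h]; ring
      linarith [h', hr_ub, K1, Nat.zero_le (q * q)]
  -- step 2
  obtain ⟨b, r2, hb, hE2, hC2⟩ := step_lemma r1 (q * (p * d ^ 2) + q) d
    (Nat.lt_of_lt_of_le hq0 (Nat.le_add_left q _))
  have hr2 : r2 < q * (p * d ^ 2) + W := by
    rcases hC2 with h | h
    · linarith
    · have h' : r1 = q * (p * d ^ 3) + d * q + r2 := by rw [h]; ring
      linarith [h', hr1, Nat.zero_le (d * q), Nat.zero_le (q * (p * d ^ 2))]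
  -- step 3
  obtain ⟨e, r3, he, hE3, hC3⟩ := step_lemma r2 (q * (p * d) + q) d
    (Nat.lt_of_lt_of_le hq0 (Nat.le_add_left q _))
  have hr3 : r3 < q * (p * d) + W := by
    rcases hC3 with h | h
    · linarith
    · have h' : r2 = q * (p * d ^ 2) + d * q + r3 := by rw [h]; ring
      linarith [h', hr2, Nat.zero_le (d * q), Nat.zero_le (q * (p * d))]
  -- step 4
  obtain ⟨g, r4, hg, hE4, hC4⟩ := step_lemma r3 (q * p + q) d
    (Nat.lt_of_lt_of_le hq0 (Nat.le_add_left q _))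
  have hr4 : r4 < W := by
    rcases hC4 with h | h
    · linarith
    · have h' : r3 = q * (p * d) + d * q + r4 := by rw [h]; ring
      linarith [h', hr3, Nat.zero_le (d * q)]
  obtain ⟨D, hD⟩ : ∃ D, d * d = 2 * d + D :=
    Nat.exists_eq_add_of_le (Nat.mul_le_mul_right d hd)
  refine ⟨a, b, e, g, r4 + D, by omega, hb, he, hg, ?_, ?_, ?_⟩
  · rw [hq1]
    linarith
  · rw [pow_two, hD]
    omega
  · linarith

theorem preprocessing (d l n : ℕ) (hd : 2 ≤ d) (hl : 8 ≤ l)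
    (h1 : d ^ (l - 1) ≤ n) (h2 : n < d ^ l) :
    ∃ a b e g m : ℕ, a ≤ d - 1 ∧ b ≤ d ∧ e ≤ d ∧ g ≤ d ∧
      n = a * ((d - 1) * d ^ (l - 2) + (d - 1))
        + b * ((d - 1) * d ^ (l - 3) + (d - 1))
        + e * ((d - 1) * d ^ (l - 4) + (d - 1))
        + g * ((d - 1) * d ^ (l - 5) + (d - 1))
        + ((d - 1) * d ^ (l - 2) + (d - 1) * d ^ (l - 3) + (d - 1) * d ^ (l - 4) + m) ∧
      d ^ 2 - 2 * d ≤ m ∧ m < d ^ (l - 4) := by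
  have e0 : d ^ l = d ^ (l - 5) * d ^ 5 := by rw [← pow_add]; congr 1; omega
  have e1 : d ^ (l - 1) = d ^ (l - 5) * d ^ 4 := by rw [← pow_add]; congr 1; omega
  have e2 : d ^ (l - 2) = d ^ (l - 5) * d ^ 3 := by rw [← pow_add]; congr 1; omega
  have e3 : d ^ (l - 3) = d ^ (l - 5) * d ^ 2 := by rw [← pow_add]; congr 1; omega
  have e4 : d ^ (l - 4) = d ^ (l - 5) * d := by
    rw [← pow_succ]; congr 1; omega
  rw [e1] at h1
  rw [e0] at h2
  rw [e2, e3, e4]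
  exact aux_lemma d (d ^ (l - 5)) n hd
    (Nat.pow_le_pow_right (by omega) (by omega)) h1 h2
end

section
/- Let d ≥ 2, m ≥ 0, and let (a_k)_{k=0}^{m} satisfy 0 ≤ a_k < d and a_0 ≠ 0. Then n = Σ_{k=0}^{m} a_k·(d^{2m+1−k} + d^k) satisfies d^{2m+1} ≤ n < d^{2m+2}, and the digit of n at position j in base d equals a_j for 0 ≤ j ≤ m and a_{2m+1−j} for m+1 ≤ j ≤ 2m+1. -/
private lemma sum_digits_lt (d : ℕ) (hd : 1 ≤ d) (b : ℕ → ℕ) :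
    ∀ j, (∀ i < j, b i < d) → ∑ i ∈ Finset.range j, b i * d ^ i < d ^ j := by
  intro j
  induction j with
  | zero => simp
  | succ j ih =>
    intro hb
    rw [Finset.sum_range_succ]
    have h1 : ∑ i ∈ Finset.range j, b i * d ^ i < d ^ j :=
      ih fun i hi => hb i (hi.trans (Nat.lt_succ_self j))
    have h2 : b j * d ^ j ≤ (d - 1) * d ^ j :=
      Nat.mul_le_mul_right _ (Nat.le_sub_one_of_lt (hb j (Nat.lt_succ_self j)))
    calc ∑ i ∈ Finset.range j, b i * d ^ i + b j * d ^ j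
        < d ^ j + (d - 1) * d ^ j := by omega
      _ = d ^ (j + 1) := by
          have : d ^ j + (d - 1) * d ^ j = (1 + (d - 1)) * d ^ j := by ring
          rw [this, Nat.add_sub_cancel' hd, pow_succ, mul_comm]

private lemma digit_of_sum (d : ℕ) (hd : 2 ≤ d) (b : ℕ → ℕ) (L j : ℕ)
    (hb : ∀ i < L, b i < d) (hj : j < L) :
    (∑ i ∈ Finset.range L, b i * d ^ i) / d ^ j % d = b j := by
  obtain ⟨t, rfl⟩ : ∃ t, L = j + 1 + t := ⟨L - (j + 1), by omega⟩
  rw [Finset.sum_range_add, Finset.sum_range_add]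
  have hlow : ∑ i ∈ Finset.range j, b i * d ^ i < d ^ j :=
    sum_digits_lt d (by omega) b j (fun i hi => hb i (by omega))
  have hrw : ∑ i ∈ Finset.range 1, b (j + i) * d ^ (j + i) +
      ∑ i ∈ Finset.range t, b (j + 1 + i) * d ^ (j + 1 + i)
      = d ^ j * (b j + d * ∑ i ∈ Finset.range t, b (j + 1 + i) * d ^ i) := by
    simp only [Finset.sum_range_one, Finset.mul_sum, mul_left_comm, mul_comm]
    rw [Nat.mul_add]
    congr 1
    · ring_nf
    · rw [Finset.mul_sum]
      apply Finset.sum_congr rfl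
      intro i _
      rw [pow_add, pow_add, pow_one]
      ring
  rw [add_assoc, hrw, Nat.add_mul_div_left _ _ (Nat.pos_of_ne_zero (by positivity)),
    Nat.div_eq_of_lt hlow, zero_add, Nat.add_mul_mod_self_left,
    Nat.mod_eq_of_lt (hb j (by omega))]

theorem symmetric_sum_digits (d m : ℕ) (hd : 2 ≤ d) (a : ℕ → ℕ)
    (ha : ∀ k ≤ m, a k < d) (ha0 : a 0 ≠ 0) :
    let n := ∑ k ∈ Finset.range (m + 1), a k * (d ^ (2 * m + 1 - k) + d ^ k)
    d ^ (2 * m + 1) ≤ n ∧ n < d ^ (2 * m + 2) ∧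
    (∀ j ≤ m, n / d ^ j % d = a j) ∧
    (∀ j, m + 1 ≤ j → j ≤ 2 * m + 1 → n / d ^ j % d = a (2 * m + 1 - j)) := by
  intro n
  set b : ℕ → ℕ := fun i => if i ≤ m then a i else a (2 * m + 1 - i) with hbdef
  have hb : ∀ i < 2 * m + 2, b i < d := by
    intro i hi
    simp only [hbdef]
    split
    · exact ha i ‹_›
    · exact ha _ (by omega)
  have hn : n = ∑ i ∈ Finset.range (2 * m + 2), b i * d ^ i := by
    have hsplit : (2 : ℕ) * m + 2 = (m + 1) + (m + 1) := by omega
    rw [hsplit, Finset.sum_range_add]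
    simp only [hbdef, n]
    rw [← Finset.sum_range_reflect (fun i => b (m + 1 + i) * d ^ (m + 1 + i)) (m + 1)]
    simp only [hbdef]
    rw [← Finset.sum_add_distrib]
    apply Finset.sum_congr rfl
    intro k hk
    rw [Finset.mem_range] at hk
    have hk' : k ≤ m := by omega
    rw [if_pos hk', if_neg (by omega)]
    have h1 : 2 * m + 1 - (m + 1 + (m + 1 - 1 - k)) = k := by omega
    have h2 : m + 1 + (m + 1 - 1 - k) = 2 * m + 1 - k := by omega
    rw [h1, h2, Nat.mul_add, add_comm]
  have hdig : ∀ j < 2 * m + 2, n / d ^ j % d = b j := by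
    intro j hj
    rw [hn]
    exact digit_of_sum d hd b _ j hb hj
  refine ⟨?_, ?_, ?_, ?_⟩
  · rw [hn]
    calc d ^ (2 * m + 1) ≤ b (2 * m + 1) * d ^ (2 * m + 1) := by
          have : 1 ≤ b (2 * m + 1) := by
            simp only [hbdef, if_neg (by omega : ¬ 2 * m + 1 ≤ m)]
            have : 2 * m + 1 - (2 * m + 1) = 0 := by omega
            rw [this]
            omega
          nlinarith [Nat.pos_of_ne_zero (show d ^ (2*m+1) ≠ 0 by positivity)]
      _ ≤ _ := Finset.single_le_sum (f := fun i => b i * d ^ i)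
          (fun i _ => Nat.zero_le _) (Finset.mem_range.2 (by omega))
  · rw [hn]
    exact sum_digits_lt d (by omega) b _ hb
  · intro j hj
    rw [hdig j (by omega), hbdef]
    simp [hj]
  · intro j hj1 hj2
    rw [hdig j (by omega), hbdef]
    simp [Nat.not_le.2 (by omega : m < j)]
end
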